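/- The weights lambda(s) = Lambda^{-1} E[R(1)|S=s] E[R(0)|S=s] / (nu E[R(1)|S=s] + (1-nu) E[R(0)|S=s]), with Lambda = E[E[R(1)|S] E[R(0)|S] / (nu E[R(1)|S] + (1-nu) E[R(0)|S])], are convex weights: lambda(S) >= 0 almost surely and E[lambda(S)] = 1. Consequently, under conditional independence of (Y(1),Y(0)) and (R(1),R(0)) given S, theta_sfe = E[tau(S) lambda(S)] is a convex weighted average of the strata-level treatment effects tau(s) = E[Y(1) - Y(0) | S = s]. -/

import Mathlib

open MeasureTheory ProbabilityTheory

/-- A function measurable w.r.t. `comap S` is constant on fibers of `S`. -/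
lemma comapMeasurable_constOnFiber {Ω 𝒮 : Type*} [m𝒮 : MeasurableSpace 𝒮] {S : Ω → 𝒮}
    {h : Ω → ℝ} (hh : Measurable[MeasurableSpace.comap S m𝒮] h) {ω ω' : Ω}
    (hS : S ω = S ω') : h ω = h ω' := by
  obtain ⟨B, -, hB⟩ := hh (measurableSet_singleton (h ω))
  have hω : ω ∈ S ⁻¹' B := by
    rw [hB]; exact rfl
  have hω' : ω' ∈ S ⁻¹' B := by simpa [Set.mem_preimage, ← hS] using hω
  rw [hB] at hω'
  exact (Set.mem_singleton_iff.mp hω').symm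

/-- The weights `λ(s) = Λ⁻¹ E[R(1)|S=s] E[R(0)|S=s] / (ν E[R(1)|S=s] + (1-ν) E[R(0)|S=s])`
are convex weights: `λ(S) ≥ 0` a.s. and `E[λ(S)] = 1`. Consequently, under conditional
independence of `(Y(1), Y(0))` and `(R(1), R(0))` given `S`, `θ_sfe = E[τ(S) λ(S)]` is a
convex weighted average of the strata-level treatment effects `τ(s) = E[Y(1) - Y(0) | S = s]`. -/
theorem lambda_convex_weights
    {Ω : Type*} [MeasurableSpace Ω] [StandardBorelSpace Ω] [Nonempty Ω]
    (μ : Measure Ω) [IsProbabilityMeasure μ]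
    {𝒮 : Type*} [Fintype 𝒮] [MeasurableSpace 𝒮] [MeasurableSingletonClass 𝒮]
    (Y : Fin 2 → Ω → ℝ) (R : Fin 2 → Ω → ℝ) (S : Ω → 𝒮)
    (hYmeas : ∀ d, Measurable (Y d)) (hRmeas : ∀ d, Measurable (R d))
    (hSmeas : Measurable S)
    (hR01 : ∀ d ω, R d ω = 0 ∨ R d ω = 1)
    (hYint : ∀ d, Integrable (Y d) μ)
    (hRpos : ∀ d, 0 < ∫ ω, R d ω ∂μ)
    (ν : ℝ) (hν : 0 < ν ∧ ν < 1)
    (hle : MeasurableSpace.comap S inferInstance ≤ ‹MeasurableSpace Ω›)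
    (q : Fin 2 → 𝒮 → ℝ) (qy : Fin 2 → 𝒮 → ℝ) (τ : 𝒮 → ℝ)
    (hq : ∀ d, μ[R d | MeasurableSpace.comap S inferInstance]
      =ᵐ[μ] fun ω => q d (S ω))
    (hqy : ∀ d, μ[fun ω => R d ω * Y d ω | MeasurableSpace.comap S inferInstance]
      =ᵐ[μ] fun ω => qy d (S ω))
    (hτ : μ[fun ω => Y 1 ω - Y 0 ω | MeasurableSpace.comap S inferInstance]
      =ᵐ[μ] fun ω => τ (S ω))
    (Λ : ℝ)
    (hΛ : Λ = ∫ ω, q 1 (S ω) * q 0 (S ω) / (ν * q 1 (S ω) + (1 - ν) * q 0 (S ω)) ∂μ)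
    (hΛpos : 0 < Λ)
    (lam : 𝒮 → ℝ)
    (hlam : ∀ s, lam s = Λ⁻¹ * (q 1 s * q 0 s / (ν * q 1 s + (1 - ν) * q 0 s))) :
    (∀ᵐ ω ∂μ, 0 ≤ lam (S ω)) ∧ (∫ ω, lam (S ω) ∂μ = 1) ∧
      (CondIndepFun (MeasurableSpace.comap S inferInstance) hle
          (fun ω => (Y 1 ω, Y 0 ω)) (fun ω => (R 1 ω, R 0 ω)) μ →
        Λ⁻¹ * ∫ ω, (qy 1 (S ω) * q 0 (S ω) - qy 0 (S ω) * q 1 (S ω))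
            / (ν * q 1 (S ω) + (1 - ν) * q 0 (S ω)) ∂μ
          = ∫ ω, τ (S ω) * lam (S ω) ∂μ) := by
  obtain ⟨hν0, hν1⟩ := hν
  have hmSmeas : ∀ s : 𝒮, MeasurableSet[MeasurableSpace.comap S inferInstance] (S ⁻¹' {s}) :=
    fun s => ⟨{s}, measurableSet_singleton s, rfl⟩
  have hRint : ∀ d, Integrable (R d) μ := fun d =>
    (integrable_const (1 : ℝ)).mono' (hRmeas d).aestronglyMeasurable
      (Filter.Eventually.of_forall fun ω => by rcases hR01 d ω with h | h <;> simp [h])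
  have hRYint : ∀ d, Integrable (fun ω => R d ω * Y d ω) μ := fun d =>
    (hYint d).abs.mono' ((hRmeas d).mul (hYmeas d)).aestronglyMeasurable
      (Filter.Eventually.of_forall fun ω => by
        rcases hR01 d ω with h | h <;> simp [h, Real.norm_eq_abs, abs_nonneg])
  have hqnn : ∀ d, ∀ᵐ ω ∂μ, 0 ≤ q d (S ω) := by
    intro d
    filter_upwards [hq d, condExp_nonneg (m := MeasurableSpace.comap S inferInstance) (μ := μ)
      (f := R d) (Filter.Eventually.of_forall fun ω => by
        rcases hR01 d ω with h | h <;> simp [h])] with ω h1 h2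
    rw [← h1]
    simpa using h2
  have part1 : ∀ᵐ ω ∂μ, 0 ≤ lam (S ω) := by
    filter_upwards [hqnn 0, hqnn 1] with ω h0 h1
    rw [hlam]
    have hD : 0 ≤ ν * q 1 (S ω) + (1 - ν) * q 0 (S ω) :=
      add_nonneg (mul_nonneg hν0.le h1) (mul_nonneg (by linarith) h0)
    exact mul_nonneg (inv_nonneg.mpr hΛpos.le) (div_nonneg (mul_nonneg h1 h0) hD)
  have part2 : ∫ ω, lam (S ω) ∂μ = 1 := by
    have hfun : (fun ω => lam (S ω)) = fun ω =>
        Λ⁻¹ * (q 1 (S ω) * q 0 (S ω) / (ν * q 1 (S ω) + (1 - ν) * q 0 (S ω))) := by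
      funext ω; rw [hlam]
    rw [hfun, integral_const_mul, ← hΛ, inv_mul_cancel₀ hΛpos.ne']
  have hsum : ∀ g : 𝒮 → ℝ, ∫ ω, g (S ω) ∂μ = ∑ s, (μ (S ⁻¹' {s})).toReal * g s := by
    intro g
    haveI := Measure.isProbabilityMeasure_map (μ := μ) hSmeas.aemeasurable
    rw [← integral_map hSmeas.aemeasurable (measurable_of_countable g).aestronglyMeasurable,
      integral_fintype (.of_finite)]
    refine Finset.sum_congr rfl fun s _ => ?_
    rw [map_measureReal_apply hSmeas (measurableSet_singleton s), smul_eq_mul, measureReal_def]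
  have key : ∀ (f : Ω → ℝ) (g : 𝒮 → ℝ), Integrable f μ →
      (μ[f | MeasurableSpace.comap S inferInstance] =ᵐ[μ] fun ω => g (S ω)) →
      ∀ s, ∫ ω in S ⁻¹' {s}, f ω ∂μ = (μ (S ⁻¹' {s})).toReal * g s := by
    intro f g hfint hfg s
    have h1 : ∫ ω in S ⁻¹' {s}, f ω ∂μ
        = ∫ ω in S ⁻¹' {s}, (μ[f | MeasurableSpace.comap S inferInstance]) ω ∂μ :=
      (setIntegral_condExp hle hfint (hmSmeas s)).symm
    have h2 : ∫ ω in S ⁻¹' {s}, (μ[f | MeasurableSpace.comap S inferInstance]) ω ∂μ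
        = ∫ ω in S ⁻¹' {s}, g (S ω) ∂μ :=
      setIntegral_congr_ae (hle _ (hmSmeas s)) (hfg.mono fun ω h _ => h)
    have h3 : ∫ ω in S ⁻¹' {s}, g (S ω) ∂μ = ∫ (_ : Ω) in S ⁻¹' {s}, g s ∂μ :=
      setIntegral_congr_fun (hle _ (hmSmeas s)) (fun ω hω => by
        simp only [Set.mem_preimage, Set.mem_singleton_iff] at hω
        rw [hω])
    rw [h1, h2, h3, setIntegral_const, smul_eq_mul, measureReal_def]
  refine ⟨part1, part2, fun hCI => ?_⟩
  have hfY : Measurable fun ω => (Y 1 ω, Y 0 ω) := (hYmeas 1).prodMk (hYmeas 0)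
  have hfR : Measurable fun ω => (R 1 ω, R 0 ω) := (hRmeas 1).prodMk (hRmeas 0)
  replace hCI := (condIndepFun_iff (MeasurableSpace.comap S inferInstance) hle _ _ hfY hfR μ).mp hCI
  have main : ∀ s : 𝒮, μ (S ⁻¹' {s}) ≠ 0 →
      qy 1 s * q 0 s - qy 0 s * q 1 s = τ s * (q 1 s * q 0 s) := by
    intro s hs
    set A := S ⁻¹' {s} with hA
    have hAmeas : MeasurableSet A := hle _ (hmSmeas s)
    have hAfin : μ A ≠ ⊤ := measure_ne_top μ A
    have hpr : (μ A).toReal ≠ 0 := ENNReal.toReal_ne_zero.mpr ⟨hs, hAfin⟩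
    set μs : Measure Ω := (μ A)⁻¹ • μ.restrict A with hμs
    haveI : IsProbabilityMeasure μs := ⟨by
      rw [hμs, Measure.smul_apply, Measure.restrict_apply MeasurableSet.univ, Set.univ_inter,
        smul_eq_mul, ENNReal.inv_mul_cancel hs hAfin]⟩
    have hμsint : ∀ {h : Ω → ℝ}, Integrable h μ → Integrable h μs := fun hint =>
      (hint.restrict).smul_measure (by simp [ENNReal.inv_ne_top, hs])
    have hμsInt_eq : ∀ h : Ω → ℝ, ∫ ω, h ω ∂μs = ((μ A).toReal)⁻¹ * ∫ ω in A, h ω ∂μ := by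
      intro h
      rw [hμs, integral_smul_measure, ENNReal.toReal_inv, smul_eq_mul]
    -- independence of the two pairs under the stratum measure
    have hindep : IndepFun (fun ω => (Y 1 ω, Y 0 ω)) (fun ω => (R 1 ω, R 0 ω)) μs := by
      rw [indepFun_iff_measure_inter_preimage_eq_mul]
      intro B1 B2 hB1 hB2
      set t1 := (fun ω => (Y 1 ω, Y 0 ω)) ⁻¹' B1 with ht1def
      set t2 := (fun ω => (R 1 ω, R 0 ω)) ⁻¹' B2 with ht2def
      have ht1 : MeasurableSet t1 := hfY hB1
      have ht2 : MeasurableSet t2 := hfR hB2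
      have h := hCI t1 t2 ⟨B1, hB1, rfl⟩ ⟨B2, hB2, rfl⟩
      obtain ⟨ω₀, hω₀⟩ := nonempty_of_measure_ne_zero hs
      have hconst : ∀ u : Set Ω, ∀ ω ∈ A, (μ⟦u | MeasurableSpace.comap S inferInstance⟧) ω
          = (μ⟦u | MeasurableSpace.comap S inferInstance⟧) ω₀ := by
        intro u ω hω
        refine comapMeasurable_constOnFiber (stronglyMeasurable_condExp.measurable) ?_
        simp only [hA, Set.mem_preimage, Set.mem_singleton_iff] at hω hω₀
        rw [hω, hω₀]
      have hind : ∀ t : Set Ω, MeasurableSet t →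
          ∫ ω in A, (μ⟦t | MeasurableSpace.comap S inferInstance⟧) ω ∂μ
            = (μ (A ∩ t)).toReal := by
        intro t ht
        rw [setIntegral_condExp hle ((integrable_const (1 : ℝ)).indicator ht) (hmSmeas s),
          setIntegral_indicator ht, setIntegral_const, smul_eq_mul, mul_one]
        rfl
      have hconst_int : ∀ t : Set Ω, MeasurableSet t →
          ∫ ω in A, (μ⟦t | MeasurableSpace.comap S inferInstance⟧) ω ∂μ
            = (μ A).toReal * (μ⟦t | MeasurableSpace.comap S inferInstance⟧) ω₀ := by
        intro t ht
        rw [setIntegral_congr_fun hAmeas (fun ω hω => hconst t ω hω), setIntegral_const,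
          smul_eq_mul, measureReal_def]
      set c1 := (μ⟦t1 | MeasurableSpace.comap S inferInstance⟧) ω₀ with hc1
      set c2 := (μ⟦t2 | MeasurableSpace.comap S inferInstance⟧) ω₀ with hc2
      have hprod : ∫ ω in A, ((μ⟦t1 | MeasurableSpace.comap S inferInstance⟧)
          * (μ⟦t2 | MeasurableSpace.comap S inferInstance⟧)) ω ∂μ
            = (μ A).toReal * (c1 * c2) := by
        rw [setIntegral_congr_fun hAmeas (fun ω hω => by
          simp only [Pi.mul_apply]
          rw [hconst t1 ω hω, hconst t2 ω hω]), setIntegral_const, smul_eq_mul, measureReal_def]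
      have h12 : (μ (A ∩ (t1 ∩ t2))).toReal = (μ A).toReal * (c1 * c2) := by
        rw [← hind _ (ht1.inter ht2),
          setIntegral_congr_ae hAmeas (h.mono fun ω hh _ => hh), hprod]
      have h1 : (μ (A ∩ t1)).toReal = (μ A).toReal * c1 := by
        rw [← hind _ ht1, hconst_int _ ht1]
      have h2 : (μ (A ∩ t2)).toReal = (μ A).toReal * c2 := by
        rw [← hind _ ht2, hconst_int _ ht2]
      have hμsapp : ∀ t : Set Ω, MeasurableSet t → μs t = (μ A)⁻¹ * μ (A ∩ t) := by
        intro t ht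
        rw [hμs, Measure.smul_apply, Measure.restrict_apply ht, smul_eq_mul, Set.inter_comm]
      have hEN : μ (A ∩ (t1 ∩ t2)) * μ A = μ (A ∩ t1) * μ (A ∩ t2) := by
        rw [← ENNReal.toReal_eq_toReal_iff'
          (ENNReal.mul_ne_top (measure_ne_top μ _) (measure_ne_top μ _))
          (ENNReal.mul_ne_top (measure_ne_top μ _) (measure_ne_top μ _)),
          ENNReal.toReal_mul, ENNReal.toReal_mul, h12, h1, h2]
        ring
      have hone : (μ A)⁻¹ * μ A = 1 := ENNReal.inv_mul_cancel hs hAfin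
      rw [hμsapp _ (ht1.inter ht2), hμsapp _ ht1, hμsapp _ ht2]
      calc (μ A)⁻¹ * μ (A ∩ (t1 ∩ t2))
          = (μ A)⁻¹ * ((μ A)⁻¹ * (μ (A ∩ (t1 ∩ t2)) * μ A)) := by
            rw [show (μ A)⁻¹ * (μ (A ∩ (t1 ∩ t2)) * μ A)
                = ((μ A)⁻¹ * μ A) * μ (A ∩ (t1 ∩ t2)) by ring, hone, one_mul]
        _ = (μ A)⁻¹ * μ (A ∩ t1) * ((μ A)⁻¹ * μ (A ∩ t2)) := by rw [hEN]; ring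
    have hmul : ∀ d, qy d s = q d s * ∫ ω, Y d ω ∂μs := by
      intro d
      have hindd : IndepFun (R d) (Y d) μs := by
        fin_cases d
        · exact hindep.symm.comp measurable_snd measurable_snd
        · exact hindep.symm.comp measurable_fst measurable_fst
      have hRYs : ∫ ω, R d ω * Y d ω ∂μs = (∫ ω, R d ω ∂μs) * ∫ ω, Y d ω ∂μs := by
        have := hindd.integral_mul_eq_mul_integral (hμsint (hRint d)).aestronglyMeasurable (hμsint (hYint d)).aestronglyMeasurable
        simpa [Pi.mul_apply] using this
      have e1 : ∫ ω, R d ω ∂μs = q d s := by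
        rw [hμsInt_eq, key (R d) (q d) (hRint d) (hq d) s]
        field_simp
        rfl
      have e2 : ∫ ω, R d ω * Y d ω ∂μs = qy d s := by
        rw [hμsInt_eq, key (fun ω => R d ω * Y d ω) (qy d) (hRYint d) (hqy d) s]
        field_simp
        rfl
      rw [← e2, hRYs, e1]
    have hτs : τ s = ∫ ω, Y 1 ω ∂μs - ∫ ω, Y 0 ω ∂μs := by
      have e3 : ∫ ω, (Y 1 ω - Y 0 ω) ∂μs = τ s := by
        rw [hμsInt_eq, key (fun ω => Y 1 ω - Y 0 ω) τ ((hYint 1).sub (hYint 0)) hτ s]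
        field_simp
        rfl
      rw [← e3, integral_sub (hμsint (hYint 1)) (hμsint (hYint 0))]
    rw [hmul 1, hmul 0, hτs]
    ring
  have eL : (∫ ω, (qy 1 (S ω) * q 0 (S ω) - qy 0 (S ω) * q 1 (S ω))
        / (ν * q 1 (S ω) + (1 - ν) * q 0 (S ω)) ∂μ)
      = ∑ s, (μ (S ⁻¹' {s})).toReal * ((qy 1 s * q 0 s - qy 0 s * q 1 s)
        / (ν * q 1 s + (1 - ν) * q 0 s)) :=
    hsum (fun s => (qy 1 s * q 0 s - qy 0 s * q 1 s) / (ν * q 1 s + (1 - ν) * q 0 s))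
  have eR : (∫ ω, τ (S ω) * lam (S ω) ∂μ)
      = ∑ s, (μ (S ⁻¹' {s})).toReal * (τ s * lam s) :=
    hsum (fun s => τ s * lam s)
  rw [eL, eR, Finset.mul_sum]
  refine Finset.sum_congr rfl fun s _ => ?_
  by_cases hs : μ (S ⁻¹' {s}) = 0
  · simp [hs]
  · rw [main s hs, hlam]
    ring
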